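/- Let V be an N×N real positive semidefinite matrix. Then the map x ↦ det(V_x)/det(V + I), defined on subsets x of {1,…,N}, is a probability mass function: each value is nonnegative and the values sum to 1 over all subsets of {1,…,N}. In particular det(V + I) ≥ 1 > 0. -/

import Mathlib

open Matrix BigOperators

/-- The determinant of the principal submatrix of `V` indexed by the subset `x`
(with the convention `det(V_∅) = 1`, which holds automatically for the empty matrix). -/
noncomputable def principalSubdet {N : ℕ} (V : Matrix (Fin N) (Fin N) ℝ)
    (x : Finset (Fin N)) : ℝ :=
  (V.submatrix (fun i : x => (i : Fin N)) (fun i : x => (i : Fin N))).det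

lemma psd_det_nonneg {n : Type*} [Fintype n] [DecidableEq n]
    {A : Matrix n n ℝ} (hA : A.PosSemidef) : 0 ≤ A.det := by
  have h := hA.isHermitian.det_eq_prod_eigenvalues
  rw [h]
  exact Finset.prod_nonneg fun i _ => hA.eigenvalues_nonneg i

lemma principalSubdet_nonneg {N : ℕ} {V : Matrix (Fin N) (Fin N) ℝ}
    (hV : V.PosSemidef) (x : Finset (Fin N)) : 0 ≤ principalSubdet V x :=
  psd_det_nonneg (hV.submatrix _)

lemma det_piecewise_one {N : ℕ} (V : Matrix (Fin N) (Fin N) ℝ) (s : Finset (Fin N)) :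
    Matrix.det (Matrix.of (s.piecewise V (1 : Matrix (Fin N) (Fin N) ℝ))) =
      principalSubdet V s := by
  classical
  let e : {i // i ∈ s} ⊕ {i // i ∉ s} ≃ Fin N := Equiv.sumCompl (· ∈ s)
  rw [← Matrix.det_submatrix_equiv_self e]
  have hb : (Matrix.of (s.piecewise V (1 : Matrix (Fin N) (Fin N) ℝ))).submatrix e e =
      Matrix.fromBlocks
        (V.submatrix (fun i : s => (i : Fin N)) (fun i : s => (i : Fin N)))
        (V.submatrix (fun i : s => (i : Fin N)) (fun i : {i // i ∉ s} => (i : Fin N)))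
        0 1 := by
    ext i j
    cases i with
    | inl i =>
      cases j with
      | inl j => simp [e, Finset.piecewise, i.2]
      | inr j => simp [e, Finset.piecewise, i.2]
    | inr i =>
      cases j with
      | inl j =>
        have hne : (i : Fin N) ≠ (j : Fin N) := fun h => i.2 (h ▸ j.2)
        simp [e, Finset.piecewise, i.2, Matrix.one_apply, hne]
      | inr j =>
        simp [e, Finset.piecewise, i.2, Matrix.one_apply, Subtype.ext_iff]
  rw [hb, Matrix.det_fromBlocks_zero₂₁, Matrix.det_one, mul_one]
  rfl

lemma sum_principalSubdet {N : ℕ} (V : Matrix (Fin N) (Fin N) ℝ) :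
    ∑ x : Finset (Fin N), principalSubdet V x = (V + 1).det := by
  classical
  have h := (Matrix.detRowAlternating :
      (Fin N → ℝ) [⋀^Fin N]→ₗ[ℝ] ℝ).toMultilinearMap.map_add_univ
      (fun i => V i) (fun i => (1 : Matrix (Fin N) (Fin N) ℝ) i)
  have h2 : (V + 1).det = ∑ s : Finset (Fin N),
      Matrix.det (Matrix.of (s.piecewise V (1 : Matrix (Fin N) (Fin N) ℝ))) := by
    exact h
  rw [h2]
  exact Finset.sum_congr rfl fun s _ => (det_piecewise_one V s).symm

lemma principalSubdet_empty {N : ℕ} (V : Matrix (Fin N) (Fin N) ℝ) :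
    principalSubdet V ∅ = 1 := by
  have : IsEmpty ((∅ : Finset (Fin N)) : Type) := by
    simp [Finset.isEmpty_coe_sort]
    exact ⟨fun x => x.2⟩
  exact Matrix.det_isEmpty

/-- For positive semidefinite `V`, the map `x ↦ det(V_x)/det(V + I)` is a probability
mass function on subsets of `{1,…,N}`: each value is nonnegative and the values sum
to `1`; in particular `det(V + I) ≥ 1 > 0`. -/
theorem dpp_is_probability_measure (N : ℕ) (V : Matrix (Fin N) (Fin N) ℝ)
    (hV : V.PosSemidef) :
    (∀ x : Finset (Fin N), 0 ≤ principalSubdet V x / (V + 1).det) ∧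
      (∑ x : Finset (Fin N), principalSubdet V x / (V + 1).det = 1) ∧
      1 ≤ (V + 1).det ∧ 0 < (V + 1).det := by
  classical
  have hsum := sum_principalSubdet V
  have hge : 1 ≤ (V + 1).det := by
    rw [← hsum]
    calc (1 : ℝ) = principalSubdet V ∅ := (principalSubdet_empty V).symm
    _ ≤ ∑ x : Finset (Fin N), principalSubdet V x :=
        Finset.single_le_sum (fun x _ => principalSubdet_nonneg hV x) (Finset.mem_univ ∅)
  have hpos : 0 < (V + 1).det := lt_of_lt_of_le one_pos hge
  refine ⟨fun x => div_nonneg (principalSubdet_nonneg hV x) hpos.le, ?_, hge, hpos⟩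
  rw [← Finset.sum_div, hsum, div_self hpos.ne']
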